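/- arXiv:1910.02865 — 2 statements merged into one kernel-verified Lean document; each statement's English description precedes it below -/
import Mathlib

section
/- Let u : ℝ^d → ℝ^d be twice differentiable with |u(x)| = 1 for all x, and let x ∈ ℝ^d. Write P = P_{u(x)⊥} with entries P_{ij} = δ_{ij} − u_i u_j (as a function of x) and Σ_{ijkl} = P_{ij}P_{kl} + P_{ik}P_{jl} + P_{il}P_{jk}. Then for every l ∈ {1,…,d}: Σ_{i,j,k} Σ_{ijkl}(x) (∂_{x_i}∂_{x_j} u_k)(x) = Σ_{i,j,k} P_{lk} ∂_{x_i}(P_{ij} ∂_{x_j} u_k) + (∇·u) Σ_i u_i ∂_{x_i} u_l + Σ_{i,j} (u_j ∂_{x_j} u_i)(∂_{x_i} u_l) + 2 Σ_j P_{lj} ∂_{x_j}(∇·u) + 2 Σ_{j,k} P_{lj} (∂_{x_j} u_k)(Σ_i u_i ∂_{x_i} u_k), where all functions and derivatives are evaluated at x. (This is the identity Σ : ∇²u = P_{u⊥}(∇·(P_{u⊥}∇u)) + (∇·u)(u·∇)u + (((u·∇)u)·P_{u⊥}∇)u + 2P_{u⊥}∇(∇·u) + 2(P_{u⊥}∇u)((u·∇)u).)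 -/
open Finset

lemma key_alg {d : ℕ} (a : Fin d → ℝ) (D : Fin d → Fin d → ℝ) (S : Fin d → Fin d → Fin d → ℝ)
    (P : Fin d → Fin d → ℝ)
    (hP : ∀ i j, P i j = (if i = j then (1:ℝ) else 0) - a i * a j)
    (hC1 : ∀ i, (∑ k, a k * D i k) = 0)
    (hC2 : ∀ i j, (∑ k, a k * S i j k) = -∑ k, D i k * D j k)
    (hsym : ∀ i j k, S i j k = S j i k) (l : Fin d) :
    (∑ i, ∑ j, ∑ k, (P i j * P k l + P i k * P j l + P i l * P j k) * S i j k)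
      = (∑ i, ∑ j, ∑ k, P l k * (-(D i i * a j + a i * D i j) * D j k + P i j * S i j k))
        + (∑ i, D i i) * (∑ i, a i * D i l)
        + (∑ i, (∑ j, a j * D j i) * D i l)
        + 2 * (∑ j, P l j * (∑ i, S j i i))
        + 2 * (∑ j, ∑ k, P l j * D j k * (∑ i, a i * D i k)) := by
  have hPs : ∀ i j, P i j = P j i := by
    intro i j
    rw [hP, hP, mul_comm]
    congr 1
    simp [eq_comm]
  have hPc : ∀ (f : Fin d → ℝ) (m : Fin d),
      (∑ k, P m k * f k) = f m - a m * ∑ k, a k * f k := by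
    intro f m
    have : ∀ k, P m k * f k = (if m = k then f k else 0) - a m * (a k * f k) := by
      intro k
      rw [hP]
      by_cases h : m = k <;> simp [h] <;> ring
    simp only [this, Finset.sum_sub_distrib, Finset.sum_ite_eq, mem_univ, if_true,
      ← Finset.mul_sum]
  -- split left side
  have eL : (∑ i, ∑ j, ∑ k, (P i j * P k l + P i k * P j l + P i l * P j k) * S i j k)
      = (∑ i, ∑ j, ∑ k, (P i j * P k l) * S i j k)
        + (∑ i, ∑ j, ∑ k, (P i k * P j l) * S i j k)
        + (∑ i, ∑ j, ∑ k, (P i l * P j k) * S i j k) := by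
    simp only [add_mul, Finset.sum_add_distrib]
  -- split first RHS sum
  have eR : (∑ i, ∑ j, ∑ k, P l k * (-(D i i * a j + a i * D i j) * D j k + P i j * S i j k))
      = (∑ i, ∑ j, ∑ k, P l k * (-(D i i * a j + a i * D i j) * D j k))
        + (∑ i, ∑ j, ∑ k, P l k * (P i j * S i j k)) := by
    simp only [mul_add, Finset.sum_add_distrib]
  -- T1 = R2
  have hT1 : (∑ i, ∑ j, ∑ k, (P i j * P k l) * S i j k)
      = ∑ i, ∑ j, ∑ k, P l k * (P i j * S i j k) := by
    refine Finset.sum_congr rfl fun i _ => Finset.sum_congr rfl fun j _ =>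
      Finset.sum_congr rfl fun k _ => ?_
    rw [hPs l k]; ring
  -- R1 computation
  have hR1 : (∑ i, ∑ j, ∑ k, P l k * (-(D i i * a j + a i * D i j) * D j k))
      = -((∑ i, D i i) * (∑ i, a i * D i l)) - (∑ i, (∑ j, a j * D j i) * D i l) := by
    have step1 : ∀ i j : Fin d, (∑ k, P l k * (-(D i i * a j + a i * D i j) * D j k))
        = -(D i i * (a j * D j l)) - a i * D i j * D j l := by
      intro i j
      have : (∑ k, P l k * (-(D i i * a j + a i * D i j) * D j k))
          = (-(D i i * a j + a i * D i j)) * ∑ k, P l k * D j k := by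
        rw [Finset.mul_sum]
        exact Finset.sum_congr rfl fun k _ => by ring
      rw [this, hPc (fun k => D j k) l, hC1 j]
      ring
    simp only [step1]
    rw [Finset.sum_comm (f := fun i j => -(D i i * (a j * D j l)) - a i * D i j * D j l)]
    simp only [Finset.sum_sub_distrib]
    rw [Finset.sum_comm (f := fun j i => -(D i i * (a j * D j l)))]
    congr 1
    · simp only [Finset.sum_neg_distrib, neg_inj]
      rw [Finset.sum_mul]
      refine Finset.sum_congr rfl fun i _ => ?_
      rw [Finset.mul_sum]
    · refine Finset.sum_congr rfl fun i _ => ?_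
      rw [Finset.sum_mul]
  -- T2s = T3s
  have hT23 : (∑ i, ∑ j, ∑ k, (P i k * P j l) * S i j k)
      = ∑ i, ∑ j, ∑ k, (P i l * P j k) * S i j k := by
    rw [Finset.sum_comm (f := fun i j => ∑ k, (P i k * P j l) * S i j k)]
    refine Finset.sum_congr rfl fun i _ => Finset.sum_congr rfl fun j _ =>
      Finset.sum_congr rfl fun k _ => ?_
    rw [hsym j i k]; ring
  -- T3s value
  have hT3 : (∑ i, ∑ j, ∑ k, (P i l * P j k) * S i j k)
      = ∑ i, P i l * ((∑ j, S i j j) + (∑ j, a j * (∑ k, D i k * D j k))) := by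
    refine Finset.sum_congr rfl fun i _ => ?_
    have inner : ∀ j, (∑ k, (P i l * P j k) * S i j k)
        = P i l * (S i j j + a j * (∑ k, D i k * D j k)) := by
      intro j
      have : (∑ k, (P i l * P j k) * S i j k) = P i l * ∑ k, P j k * S i j k := by
        rw [Finset.mul_sum]
        exact Finset.sum_congr rfl fun k _ => by ring
      rw [this, hPc (fun k => S i j k) j, hC2 i j]
      ring
    simp only [inner, ← Finset.mul_sum, Finset.sum_add_distrib]
  -- term4
  have h4 : (∑ j, P l j * (∑ i, S j i i)) = ∑ i, P i l * (∑ j, S i j j) := by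
    exact Finset.sum_congr rfl fun j _ => by rw [hPs l j]
  -- term5
  have h5 : (∑ j, ∑ k, P l j * D j k * (∑ i, a i * D i k))
      = ∑ i, P i l * (∑ j, a j * (∑ k, D i k * D j k)) := by
    refine Finset.sum_congr rfl fun j _ => ?_
    have : (∑ k, P l j * D j k * (∑ i, a i * D i k))
        = P l j * ∑ k, D j k * (∑ i, a i * D i k) := by
      rw [Finset.mul_sum]
      exact Finset.sum_congr rfl fun k _ => by ring
    rw [this, hPs l j]
    congr 1
    calc (∑ k, D j k * (∑ i, a i * D i k)) = ∑ k, ∑ i, D j k * (a i * D i k) := by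
          exact Finset.sum_congr rfl fun k _ => Finset.mul_sum _ _ _
      _ = ∑ i, ∑ k, D j k * (a i * D i k) := Finset.sum_comm
      _ = ∑ m, a m * (∑ k, D j k * D m k) := by
          refine Finset.sum_congr rfl fun m _ => ?_
          rw [Finset.mul_sum]
          exact Finset.sum_congr rfl fun k _ => by ring
  rw [eL, eR, hT1, hR1, hT23, hT3, h4, h5]
  simp only [mul_add, Finset.sum_add_distrib]
  ring



/-- the identity
`Σ : ∇²u = P_{u⊥}(∇·(P_{u⊥}∇u)) + (∇·u)(u·∇)u + (((u·∇)u)·P_{u⊥}∇)u + 2P_{u⊥}∇(∇·u)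
  + 2(P_{u⊥}∇u)((u·∇)u)`
for a twice differentiable unit vector field `u`, written componentwise. Here
`Pf y i j = δ_{ij} − u_i(y)u_j(y)`, `D i j = ∂_{x_i}u_j(x)`,
`S i j k = ∂_{x_i}∂_{x_j}u_k(x)` and `Σ_{ijkl} = P_{ij}P_{kl} + P_{ik}P_{jl} + P_{il}P_{jk}`
(all evaluated at `x`). -/
theorem stmt16 (d : ℕ) (hd : 2 ≤ d)
    (u : EuclideanSpace ℝ (Fin d) → EuclideanSpace ℝ (Fin d))
    (hu : Differentiable ℝ u) (hu2 : Differentiable ℝ (fderiv ℝ u))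
    (hnorm : ∀ x, ‖u x‖ = 1)
    (x : EuclideanSpace ℝ (Fin d))
    (Pf : EuclideanSpace ℝ (Fin d) → Fin d → Fin d → ℝ)
    (hPf : ∀ y i j, Pf y i j = (if i = j then (1 : ℝ) else 0) - u y i * u y j)
    (D : Fin d → Fin d → ℝ)
    (hD : ∀ i j, D i j = fderiv ℝ u x (EuclideanSpace.single i (1 : ℝ)) j)
    (S : Fin d → Fin d → Fin d → ℝ)
    (hS : ∀ i j k, S i j k =
      fderiv ℝ (fderiv ℝ u) x (EuclideanSpace.single i (1 : ℝ))
        (EuclideanSpace.single j (1 : ℝ)) k) :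
    ∀ l, (∑ i, ∑ j, ∑ k,
        (Pf x i j * Pf x k l + Pf x i k * Pf x j l + Pf x i l * Pf x j k) * S i j k)
      = (∑ i, ∑ j, ∑ k, Pf x l k *
            fderiv ℝ (fun y => Pf y i j *
              fderiv ℝ u y (EuclideanSpace.single j (1 : ℝ)) k) x
              (EuclideanSpace.single i (1 : ℝ)))
        + (∑ i, D i i) * (∑ i, u x i * D i l)
        + (∑ i, (∑ j, u x j * D j i) * D i l)
        + 2 * (∑ j, Pf x l j *
            fderiv ℝ (fun y => ∑ i,
              fderiv ℝ u y (EuclideanSpace.single i (1 : ℝ)) i) x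
              (EuclideanSpace.single j (1 : ℝ)))
        + 2 * (∑ j, ∑ k, Pf x l j * D j k * (∑ i, u x i * D i k)) := by
  intro l
  -- coordinate derivative facts
  have hcoord : ∀ (y : EuclideanSpace ℝ (Fin d)) (i : Fin d),
      HasFDerivAt (fun z => u z i)
        ((EuclideanSpace.proj (𝕜 := ℝ) i).comp (fderiv ℝ u y)) y := by
    intro y i
    have h := (EuclideanSpace.proj (𝕜 := ℝ) i).hasFDerivAt.comp y (hu y).hasFDerivAt
    exact h
  have hdcoord : ∀ (y : EuclideanSpace ℝ (Fin d)) (j k : Fin d),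
      HasFDerivAt (fun z => fderiv ℝ u z (EuclideanSpace.single j (1:ℝ)) k)
        ((EuclideanSpace.proj (𝕜 := ℝ) k).comp
          ((ContinuousLinearMap.apply ℝ (EuclideanSpace ℝ (Fin d))
            (EuclideanSpace.single j (1:ℝ))).comp (fderiv ℝ (fderiv ℝ u) y))) y := by
    intro y j k
    have h := (EuclideanSpace.proj (𝕜 := ℝ) k).hasFDerivAt.comp y
      ((ContinuousLinearMap.apply ℝ (EuclideanSpace ℝ (Fin d))
        (EuclideanSpace.single j (1:ℝ))).hasFDerivAt.comp y (hu2 y).hasFDerivAt)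
    exact h
  -- unit norm in coordinates
  have hsq : ∀ y : EuclideanSpace ℝ (Fin d), (∑ k, u y k * u y k) = 1 := by
    intro y
    have h := hnorm y
    rw [EuclideanSpace.norm_eq] at h
    have h2 : (∑ k, ‖u y k‖ ^ 2) = 1 := Real.sqrt_eq_one.mp h
    calc (∑ k, u y k * u y k) = ∑ k, ‖u y k‖ ^ 2 := by
          refine Finset.sum_congr rfl fun k _ => ?_
          rw [Real.norm_eq_abs, sq_abs, sq]
      _ = 1 := h2
  -- first constraint, at every point
  have hC1' : ∀ (y : EuclideanSpace ℝ (Fin d)) (i : Fin d),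
      (∑ k, u y k * fderiv ℝ u y (EuclideanSpace.single i (1:ℝ)) k) = 0 := by
    intro y i
    have hds : HasFDerivAt (fun z => ∑ k, u z k * u z k)
        (∑ k : Fin d, (u y k • ((EuclideanSpace.proj (𝕜 := ℝ) k).comp (fderiv ℝ u y))
          + u y k • ((EuclideanSpace.proj (𝕜 := ℝ) k).comp (fderiv ℝ u y)))) y :=
      HasFDerivAt.fun_sum fun k _ => (hcoord y k).mul (hcoord y k)
    have h0 : HasFDerivAt (fun z => ∑ k, u z k * u z k)
        (0 : EuclideanSpace ℝ (Fin d) →L[ℝ] ℝ) y := by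
      have hfun : (fun z => ∑ k, u z k * u z k) = fun _ => (1:ℝ) := funext hsq
      rw [hfun]; exact hasFDerivAt_const 1 y
    have heq := hds.unique h0
    have h2 := congrArg (fun T : EuclideanSpace ℝ (Fin d) →L[ℝ] ℝ =>
      T (EuclideanSpace.single i (1:ℝ))) heq
    simp only [ContinuousLinearMap.coe_sum', Finset.sum_apply, ContinuousLinearMap.add_apply,
      ContinuousLinearMap.smul_apply, ContinuousLinearMap.comp_apply,
      PiLp.proj_apply, ContinuousLinearMap.zero_apply, smul_eq_mul] at h2
    have h3 : (2:ℝ) * ∑ k, u y k * fderiv ℝ u y (EuclideanSpace.single i (1:ℝ)) k = 0 := by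
      rw [Finset.mul_sum, ← h2]
      exact Finset.sum_congr rfl fun k _ => by ring
    linarith
  -- second constraint
  have hC2' : ∀ i j : Fin d, (∑ k, u x k * S i j k) = -∑ k, D i k * D j k := by
    intro i j
    have hds : HasFDerivAt
        (fun z => ∑ k, u z k * fderiv ℝ u z (EuclideanSpace.single j (1:ℝ)) k)
        (∑ k : Fin d,
          (u x k • ((EuclideanSpace.proj (𝕜 := ℝ) k).comp
            ((ContinuousLinearMap.apply ℝ (EuclideanSpace ℝ (Fin d))
              (EuclideanSpace.single j (1:ℝ))).comp (fderiv ℝ (fderiv ℝ u) x)))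
          + (fderiv ℝ u x (EuclideanSpace.single j (1:ℝ)) k) •
              ((EuclideanSpace.proj (𝕜 := ℝ) k).comp (fderiv ℝ u x)))) x :=
      HasFDerivAt.fun_sum fun k _ => (hcoord x k).mul (hdcoord x j k)
    have h0 : HasFDerivAt
        (fun z => ∑ k, u z k * fderiv ℝ u z (EuclideanSpace.single j (1:ℝ)) k)
        (0 : EuclideanSpace ℝ (Fin d) →L[ℝ] ℝ) x := by
      have hfun : (fun z => ∑ k, u z k * fderiv ℝ u z (EuclideanSpace.single j (1:ℝ)) k)
          = fun _ => (0:ℝ) := funext fun z => hC1' z j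
      rw [hfun]; exact hasFDerivAt_const 0 x
    have heq := hds.unique h0
    have h2 := congrArg (fun T : EuclideanSpace ℝ (Fin d) →L[ℝ] ℝ =>
      T (EuclideanSpace.single i (1:ℝ))) heq
    simp only [ContinuousLinearMap.coe_sum', Finset.sum_apply, ContinuousLinearMap.add_apply,
      ContinuousLinearMap.smul_apply, ContinuousLinearMap.comp_apply,
      ContinuousLinearMap.apply_apply, PiLp.proj_apply,
      ContinuousLinearMap.zero_apply, smul_eq_mul] at h2
    have h3 : (∑ k, (u x k * S i j k + D i k * D j k)) = 0 := by
      rw [← h2]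
      refine Finset.sum_congr rfl fun k _ => ?_
      rw [hS, hD, hD]; ring
    rw [Finset.sum_add_distrib] at h3
    linarith
  -- symmetry of second derivative
  have hsym : ∀ i j k : Fin d, S i j k = S j i k := by
    intro i j k
    rw [hS, hS]
    exact congrArg (fun v => v k) (second_derivative_symmetric (fun y => (hu y).hasFDerivAt)
      (hu2 x).hasFDerivAt _ _)
  -- first fderiv computation
  have hF1 : ∀ i j k : Fin d,
      fderiv ℝ (fun y => Pf y i j * fderiv ℝ u y (EuclideanSpace.single j (1:ℝ)) k) x
          (EuclideanSpace.single i (1:ℝ))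
        = -(D i i * u x j + u x i * D i j) * D j k + Pf x i j * S i j k := by
    intro i j k
    have hPd : HasFDerivAt (fun y => Pf y i j)
        (-(u x i • ((EuclideanSpace.proj (𝕜 := ℝ) j).comp (fderiv ℝ u x))
          + u x j • ((EuclideanSpace.proj (𝕜 := ℝ) i).comp (fderiv ℝ u x)))) x := by
      have hfun : (fun y => Pf y i j)
          = fun y => (if i = j then (1:ℝ) else 0) - u y i * u y j :=
        funext fun y => hPf y i j
      rw [hfun]
      exact ((hcoord x i).mul (hcoord x j)).const_sub _
    have hmul := hPd.fun_mul (hdcoord x j k)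
    rw [hmul.fderiv]
    simp only [ContinuousLinearMap.add_apply, ContinuousLinearMap.smul_apply,
      ContinuousLinearMap.neg_apply, ContinuousLinearMap.comp_apply,
      ContinuousLinearMap.apply_apply, PiLp.proj_apply, smul_eq_mul]
    rw [hD i i, hD i j, hD j k, hS i j k]
    ring
  -- second fderiv computation
  have hF2 : ∀ j : Fin d,
      fderiv ℝ (fun y => ∑ i, fderiv ℝ u y (EuclideanSpace.single i (1:ℝ)) i) x
          (EuclideanSpace.single j (1:ℝ))
        = ∑ i, S j i i := by
    intro j
    have hds : HasFDerivAt
        (fun y => ∑ i, fderiv ℝ u y (EuclideanSpace.single i (1:ℝ)) i)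
        (∑ i : Fin d, ((EuclideanSpace.proj (𝕜 := ℝ) i).comp
          ((ContinuousLinearMap.apply ℝ (EuclideanSpace ℝ (Fin d))
            (EuclideanSpace.single i (1:ℝ))).comp (fderiv ℝ (fderiv ℝ u) x)))) x :=
      HasFDerivAt.fun_sum fun i _ => hdcoord x i i
    rw [hds.fderiv]
    simp only [ContinuousLinearMap.coe_sum', Finset.sum_apply, ContinuousLinearMap.comp_apply,
      ContinuousLinearMap.apply_apply, PiLp.proj_apply]
    exact Finset.sum_congr rfl fun i _ => (hS j i i).symm
  -- rewrite the goal and apply the algebraic identity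
  simp only [hF1, hF2]
  refine key_alg (fun m => u x m) D S (Pf x) (hPf x) ?_ ?_ hsym l
  · intro i
    have := hC1' x i
    simp only [← hD] at this
    exact this
  · intro i j
    exact hC2' i j
end

section
/- Let κ > 0, let Z > 0 be a constant, let ρ : ℝ^d → (0,∞) be differentiable, let u : ℝ^d → ℝ^d be differentiable with |u(x)| = 1 for all x, and fix ω ∈ S^{d-1}. Define F(x) = ρ(x) Z⁻¹ exp((κ/2)(ω·u(x))²). Then at every point x, writing ω⊥ = ω − (ω·u(x)) u(x), (u·∇)u = Σ_i u_i ∂_{x_i}u, and (ω⊥·∇)u = Σ_i (ω⊥)_i ∂_{x_i}u, one has the identity ω·∇_x F(x) = F(x) [ (ω·u)(u·∇_x log ρ) + ω⊥·∇_x log ρ + κ (ω·u)² ω⊥·((u·∇)u) + κ (ω·u) ω⊥·((ω⊥·∇)u) ], where ∇_x log ρ = ∇_x ρ / ρ and all functions are evaluated at x. In particular ω·∇_x(ρ M_u) decomposes as ρ M_u (S_{e,o} + S_{o,e}), where S_{e,o} = ω⊥·∇log ρ + κ(ω·u)² ω⊥·((u·∇)u) is even in (ω·u) and odd in ω⊥,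 and S_{o,e} = (ω·u)(u·∇log ρ) + κ(ω·u) ω⊥·((ω⊥·∇)u) is odd in (ω·u) and even in ω⊥. -/
open scoped RealInnerProductSpace

/-- the chain-rule identity for the transport term applied to the local
equilibrium `F = ρ M_u`, `M_{u(x)}(ω) = Z⁻¹ exp((κ/2)(ω·u(x))²)`:
`ω·∇ₓF = F [ (ω·u)(u·∇ log ρ) + ω⊥·∇ log ρ + κ(ω·u)² ω⊥·((u·∇)u)
  + κ(ω·u) ω⊥·((ω⊥·∇)u) ]`,
where `ω⊥ = ω − (ω·u(x))u(x)`, directional derivatives are `fderiv`s, and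
`∇ log ρ = ∇ρ/ρ`. -/
theorem stmt19 (d : ℕ) (hd : 2 ≤ d)
    (κ : ℝ) (hκ : 0 < κ) (Z : ℝ) (hZ : 0 < Z)
    (ρ : EuclideanSpace ℝ (Fin d) → ℝ)
    (hρdiff : Differentiable ℝ ρ) (hρpos : ∀ x, 0 < ρ x)
    (u : EuclideanSpace ℝ (Fin d) → EuclideanSpace ℝ (Fin d))
    (hudiff : Differentiable ℝ u) (hunorm : ∀ x, ‖u x‖ = 1)
    (ω : EuclideanSpace ℝ (Fin d)) (hω : ‖ω‖ = 1)
    (F : EuclideanSpace ℝ (Fin d) → ℝ)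
    (hF : ∀ x, F x = ρ x * (Z⁻¹ * Real.exp (κ / 2 * ⟪ω, u x⟫ ^ 2)))
    (x : EuclideanSpace ℝ (Fin d))
    (ωperp : EuclideanSpace ℝ (Fin d))
    (hωperp : ωperp = ω - ⟪ω, u x⟫ • u x) :
    fderiv ℝ F x ω
      = F x * (⟪ω, u x⟫ * (fderiv ℝ ρ x (u x) / ρ x)
          + fderiv ℝ ρ x ωperp / ρ x
          + κ * ⟪ω, u x⟫ ^ 2 * ⟪ωperp, fderiv ℝ u x (u x)⟫
          + κ * ⟪ω, u x⟫ * ⟪ωperp, fderiv ℝ u x ωperp⟫) := by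
  set Du := fderiv ℝ u x with hDu
  set Dρ := fderiv ℝ ρ x with hDρdef
  -- orthogonality: ⟪u x, Du v⟫ = 0
  have horth : ∀ v, ⟪u x, Du v⟫ = 0 := by
    intro v
    have h1 : HasFDerivAt (fun y => ⟪u y, u y⟫)
        ((fderivInnerCLM ℝ (u x, u x)).comp (Du.prod Du)) x :=
      (hudiff x).hasFDerivAt.inner ℝ (hudiff x).hasFDerivAt
    have h2 : (fun y => ⟪u y, u y⟫) = fun _ => (1 : ℝ) := by
      funext y
      rw [real_inner_self_eq_norm_sq, hunorm y, one_pow]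
    rw [h2] at h1
    have h3 := h1.unique (hasFDerivAt_const 1 x)
    have h4 : ((fderivInnerCLM ℝ (u x, u x)).comp (Du.prod Du)) v
        = (0 : _ →L[ℝ] ℝ) v := by rw [h3]
    simp only [ContinuousLinearMap.comp_apply, ContinuousLinearMap.prod_apply,
      fderivInnerCLM_apply, ContinuousLinearMap.zero_apply] at h4
    have := real_inner_comm (u x) (Du v)
    linarith [h4, real_inner_comm (Du v) (u x)]
  -- derivative of y ↦ ⟪ω, u y⟫
  have hinner : HasFDerivAt (fun y => ⟪ω, u y⟫)
      ((fderivInnerCLM ℝ (ω, u x)).comp ((0 : _ →L[ℝ] _).prod Du)) x :=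
    (hasFDerivAt_const ω x).inner ℝ (hudiff x).hasFDerivAt
  have hg := (hinner.mul hinner).const_mul (κ / 2)
  simp only [← pow_two] at hg
  have hexp := hg.exp
  have hZe := hexp.const_mul Z⁻¹
  have hFd := (hρdiff x).hasFDerivAt.mul hZe
  have hFeq : F = fun y => ρ y * (Z⁻¹ * Real.exp (κ / 2 * ⟪ω, u y⟫ ^ 2)) := funext hF
  rw [hFeq]
  rw [(show HasFDerivAt (fun y => ρ y * (Z⁻¹ * Real.exp (κ / 2 * ⟪ω, u y⟫ ^ 2))) _ x from hFd).fderiv]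
  have hdecomp : ω = ωperp + ⟪ω, u x⟫ • u x := by rw [hωperp]; abel
  have hDρ : Dρ ω = Dρ ωperp + ⟪ω, u x⟫ * Dρ (u x) := by
    conv_lhs => rw [hdecomp]
    simp [map_add, map_smul]
  have hDuω : ⟪ω, Du ω⟫ = ⟪ωperp, Du ωperp⟫ + ⟪ω, u x⟫ * ⟪ωperp, Du (u x)⟫ := by
    have hperp : ∀ v, ⟪ω, Du v⟫ = ⟪ωperp, Du v⟫ := by
      intro v
      conv_lhs => rw [hdecomp]
      rw [inner_add_left, real_inner_smul_left, horth v]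
      ring
    have : Du ω = Du ωperp + ⟪ω, u x⟫ • Du (u x) := by
      conv_lhs => rw [hdecomp]
      simp [map_add, map_smul]
    rw [hperp, this, inner_add_right, real_inner_smul_right]
  simp only [ContinuousLinearMap.add_apply, ContinuousLinearMap.smul_apply,
    ContinuousLinearMap.comp_apply, ContinuousLinearMap.prod_apply,
    fderivInnerCLM_apply, ContinuousLinearMap.zero_apply, smul_eq_mul,
    inner_zero_right, inner_zero_left, Pi.pow_apply]
  rw [show (fderiv ℝ ρ x) = Dρ from hDρdef.symm, hDρ, hDuω]
  have hρx := (hρpos x).ne'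
  field_simp
  ring
end
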